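/- Let q = p^r be a prime power. Let χ : F_q² → ℂ^× be a group homomorphism for the group law (a_1,a_2)·(b_1,b_2) = (a_1+b_1, a_2+a_1b_1+b_2) on F_q², and assume χ is not trivial on the subgroup {(0,c) : c ∈ F_q}, i.e. χ(0,c) ≠ 1 for some c ∈ F_q. Then (∑_{a ∈ F_q} χ(a, 0)) · conj(∑_{a ∈ F_q} χ(a, 0)) = q; in particular |∑_{a ∈ F_q} χ(a,0)| = √q. -/

import Mathlib

open Finset

/-- For a character `χ` of the group `(F_q², ·)` with
`(a₁,a₂)·(b₁,b₂) = (a₁+b₁, a₂+a₁b₁+b₂)` that is nontrivial on the subgroup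
`{(0,c)}`, the Gauss-type sum `∑_a χ(a,0)` has `|∑_a χ(a,0)|² = q`. -/
theorem charSum_two_coeff_abs_sq (p r : ℕ) (hp : p.Prime) (hr : 1 ≤ r)
    {F : Type} [Field F] [Fintype F] (hF : Fintype.card F = p ^ r)
    (χ : F → F → ℂ)
    (hne : ∀ a₁ a₂ : F, χ a₁ a₂ ≠ 0)
    (hmul : ∀ a₁ a₂ b₁ b₂ : F,
      χ (a₁ + b₁) (a₂ + a₁ * b₁ + b₂) = χ a₁ a₂ * χ b₁ b₂)
    (hnt : ∃ c : F, χ 0 c ≠ 1) :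
    (∑ a : F, χ a 0) * (starRingEnd ℂ) (∑ a : F, χ a 0) = ((p : ℂ) ^ r) := by
  classical
  have h00 : χ 0 0 = 1 := by
    have h := hmul 0 0 0 0
    simp only [add_zero, zero_add, mul_zero, zero_mul] at h
    have h' : χ 0 0 * 1 = χ 0 0 * χ 0 0 := by rw [mul_one]; exact h
    exact (mul_left_cancel₀ (hne 0 0) h').symm
  -- power formula
  have hpow : ∀ (a b : F) (n : ℕ),
      (χ a b) ^ n = χ ((n : F) * a) ((n : F) * b + (n.choose 2 : F) * (a * a)) := by
    intro a b n
    induction n with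
    | zero => simp [h00]
    | succ n ih =>
      rw [pow_succ, ih, ← hmul]
      congr 1
      · push_cast; ring
      · rw [Nat.choose_succ_succ n 1, Nat.choose_one_right]
        push_cast; ring
  -- (q : F) = 0
  have hq0 : ((p ^ r : ℕ) : F) = 0 := by
    rw [← hF]; exact FiniteField.cast_card_eq_zero F
  -- every value of χ is a root of unity, hence has modulus 1
  have habs : ∀ a b : F, ‖χ a b‖ = 1 := by
    intro a b
    set n : ℕ := 2 * p ^ r with hn
    have hnpos : 0 < n := by
      have := hp.pos
      positivity
    have hcF : ((n.choose 2 : ℕ) : F) = 0 := by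
      have hdvd : (p ^ r : ℕ) ∣ n.choose 2 := by
        have : n.choose 2 = p ^ r * (n - 1) := by
          rw [Nat.choose_two_right, hn]
          have h2 : 2 * p ^ r * (2 * p ^ r - 1) = 2 * (p ^ r * (2 * p ^ r - 1)) := by ring
          rw [h2, Nat.mul_div_cancel_left _ (by norm_num)]
        exact this ▸ ⟨n - 1, rfl⟩
      obtain ⟨k, hk⟩ := hdvd
      rw [hk, Nat.cast_mul, hq0, zero_mul]
    have hnF : ((n : ℕ) : F) = 0 := by
      rw [hn, Nat.cast_mul, hq0, mul_zero]
    have h1 : (χ a b) ^ n = 1 := by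
      rw [hpow, hnF, hcF]; simpa using h00
    have h2 : (‖χ a b‖) ^ n = 1 := by
      rw [← norm_pow, h1, norm_one]
    have h3 : (0:ℝ) ≤ ‖χ a b‖ := norm_nonneg _
    rcases lt_trichotomy (‖χ a b‖) 1 with h | h | h
    · exact absurd h2 (by nlinarith [pow_lt_one₀ h3 h hnpos.ne'])
    · exact h
    · exact absurd h2 (by nlinarith [one_lt_pow₀ h hnpos.ne'])
  -- conjugate formula
  have hconj : ∀ b : F, (starRingEnd ℂ) (χ b 0) = χ (-b) (b * b) := by
    intro b
    have hinv : χ b 0 * χ (-b) (b * b) = 1 := by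
      have h := hmul b 0 (-b) (b * b)
      rw [← h]
      have e1 : b + -b = (0 : F) := by ring
      have e2 : (0 : F) + b * -b + b * b = 0 := by ring
      rw [e1, e2, h00]
    have hu : ‖χ b 0‖ = 1 := habs b 0
    have : (starRingEnd ℂ) (χ b 0) = (χ b 0)⁻¹ := (Complex.inv_eq_conj hu).symm
    rw [this]
    exact inv_eq_of_mul_eq_one_right hinv
  -- additive character ψ = χ 0 ·
  have hψ : ∀ c d : F, χ 0 (c + d) = χ 0 c * χ 0 d := by
    intro c d
    have h := hmul 0 c 0 d
    simpa using h
  have hψsum : ∑ c : F, χ 0 c = 0 := by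
    obtain ⟨c₀, hc₀⟩ := hnt
    have hshift : χ 0 c₀ * ∑ c : F, χ 0 c = ∑ c : F, χ 0 c := by
      rw [Finset.mul_sum]
      calc ∑ c : F, χ 0 c₀ * χ 0 c = ∑ c : F, χ 0 (c₀ + c) := by
            simp_rw [← hψ]
        _ = ∑ c : F, χ 0 c :=
            Fintype.sum_equiv (Equiv.addLeft c₀) _ _ (fun c => rfl)
    have : (χ 0 c₀ - 1) * ∑ c : F, χ 0 c = 0 := by
      rw [sub_mul, hshift, one_mul, sub_self]
    rcases mul_eq_zero.mp this with h | h
    · exact absurd (by linear_combination h) hc₀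
    · exact h
  -- inner sum vanishes for t ≠ 0
  have hkey : ∀ t : F, t ≠ 0 → ∑ b : F, χ 0 (-(b * t)) = 0 := by
    intro t ht
    have := Fintype.sum_equiv ((Equiv.mulRight₀ t ht).trans (Equiv.neg F))
      (fun b : F => χ 0 (-(b * t))) (fun c : F => χ 0 c) (fun b => rfl)
    rw [this, hψsum]
  -- main computation
  rw [map_sum, Finset.sum_mul_sum]
  simp_rw [hconj]
  have hsplit : ∀ a b : F, χ a 0 * χ (-b) (b * b) = χ (a - b) 0 * χ 0 (-(b * (a - b))) := by
    intro a b
    have h1 := hmul a 0 (-b) (b * b)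
    have h2 := hmul (a - b) 0 0 (-(b * (a - b)))
    have e1 : a + -b = a - b := by ring
    have e2 : (0 : F) + a * -b + b * b = -(b * (a - b)) := by ring
    have e3 : (a - b) + 0 = a - b := by ring
    have e4 : (0 : F) + (a - b) * 0 + -(b * (a - b)) = -(b * (a - b)) := by ring
    rw [e1, e2] at h1
    rw [e3, e4] at h2
    rw [← h1, h2]
  simp_rw [hsplit]
  rw [Finset.sum_comm]
  have hre : ∀ b : F, ∑ a : F, χ (a - b) 0 * χ 0 (-(b * (a - b)))
      = ∑ t : F, χ t 0 * χ 0 (-(b * t)) := by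
    intro b
    exact Fintype.sum_equiv (Equiv.subRight b) _ _ (fun a => rfl)
  simp_rw [hre]
  rw [Finset.sum_comm]
  have hfin : ∀ t : F, ∑ b : F, χ t 0 * χ 0 (-(b * t))
      = if t = 0 then (p : ℂ) ^ r else 0 := by
    intro t
    by_cases ht : t = 0
    · subst ht
      simp only [if_true]
      have : ∀ b : F, χ 0 0 * χ 0 (-(b * 0)) = 1 := by
        intro b; rw [mul_zero, neg_zero, h00, one_mul]
      rw [Finset.sum_congr rfl (fun b _ => this b), Finset.sum_const, Finset.card_univ, hF]
      push_cast; ring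
    · rw [if_neg ht, ← Finset.mul_sum, hkey t ht, mul_zero]
  simp_rw [hfin]
  simp [Finset.sum_ite_eq']
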